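/- arXiv:2502.02430 — 2 statements merged into one kernel-verified Lean document; each statement's English description precedes it below -/
import Mathlib

section
/- Sufficiency of the Lagrange/KKT conditions: suppose ξ* ∈ [0, ∞)^m satisfies ∑_{i=1}^m ξ*_i = R and there exists Λ ≥ 0 such that for each i ∈ {1, …, m}: if ξ*_i > 0 then (μ̃_i/Δ_i)·R_1(Δ_i/ξ*_i) = Λ, and if ξ*_i = 0 then μ̃_i/Δ_i ≤ Λ. Then ξ* maximizes ∑_{i=1}^m G_i(ξ_i) over all ξ ∈ [0, ∞)^m with ∑_{i=1}^m ξ_i ≤ R. -/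
open Real Finset

/-- Objective contribution of page `i`: `G_i(ξ) = (μ̃_i/Δ_i)·ξ·(1 − exp(−Δ_i/ξ))` for `ξ > 0`
and `G_i(0) = 0`. -/
noncomputable def Gfun (μ Δ ξ : ℝ) : ℝ :=
  if ξ = 0 then 0 else (μ / Δ) * ξ * (1 - Real.exp (-(Δ / ξ)))

lemma Gfun_tangent (μ Δ Λ s x : ℝ) (hμ : 0 < μ) (hΔ : 0 < Δ) (hΛ : 0 ≤ Λ)
    (hs : 0 ≤ s) (hx : 0 ≤ x)
    (hact : 0 < s → (μ / Δ) * (1 - (1 + Δ / s) * Real.exp (-(Δ / s))) = Λ)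
    (hinact : s = 0 → μ / Δ ≤ Λ) :
    Gfun μ Δ x ≤ Gfun μ Δ s + Λ * (x - s) := by
  have hc : 0 < μ / Δ := div_pos hμ hΔ
  rcases hs.eq_or_lt with hs0 | hs0
  · -- s = 0 case
    have hΛc := hinact hs0.symm
    rcases hx.eq_or_lt with hx0 | hx0
    · simp [Gfun, ← hx0, ← hs0]
    · have hxne : x ≠ 0 := ne_of_gt hx0
      simp only [Gfun, if_neg hxne, if_pos hs0.symm, ← hs0, if_true]
      have hA : 0 < Δ / x := div_pos hΔ hx0
      have hE : 0 < Real.exp (-(Δ / x)) := Real.exp_pos _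
      have hE1 : Real.exp (-(Δ / x)) ≤ 1 := by
        rw [Real.exp_le_one_iff]; linarith
      nlinarith [mul_le_mul_of_nonneg_right hΛc hx, mul_pos hc hx0, mul_pos (mul_pos hc hx0) hE]
  · -- s > 0 case
    have hsne : s ≠ 0 := ne_of_gt hs0
    have hB : 0 < Δ / s := div_pos hΔ hs0
    have hEB : 0 < Real.exp (-(Δ / s)) := Real.exp_pos _
    have hΛeq := hact hs0
    rcases hx.eq_or_lt with hx0 | hx0
    · -- x = 0 : need Λ * s ≤ Gfun μ Δ s
      rw [← hx0]
      simp only [Gfun, if_pos rfl, if_neg hsne, if_true]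
      have hBs : (Δ / s) * s = Δ := div_mul_cancel₀ _ hsne
      nlinarith [mul_pos hB hEB, mul_pos (mul_pos hB hEB) hs0]
    · have hxne : x ≠ 0 := ne_of_gt hx0
      simp only [Gfun, if_neg hxne, if_neg hsne]
      have hA : 0 < Δ / x := div_pos hΔ hx0
      set A := Δ / x with hAdef
      set B := Δ / s with hBdef
      have hexp : Real.exp (-A) = Real.exp (-B) * Real.exp (B - A) := by
        rw [← Real.exp_add]; ring_nf
      have hone : B - A + 1 ≤ Real.exp (B - A) := Real.add_one_le_exp _
      have hkey : x * Real.exp (-B) * (B - A + 1) ≤ x * Real.exp (-A) := by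
        rw [hexp]
        have : 0 ≤ x * Real.exp (-B) := by positivity
        nlinarith
      have hAx : A * x = Δ := div_mul_cancel₀ _ hxne
      have hBs : B * s = Δ := div_mul_cancel₀ _ hsne
      -- goal: c*x*(1-e^{-A}) ≤ c*s*(1-e^{-B}) + Λ*(x-s)
      rw [← hΛeq]
      have hxB : x * B = Δ * x / s := by
        rw [hBdef]; field_simp
      nlinarith [mul_le_mul_of_nonneg_left hkey hc.le, mul_pos hc hs0,
        mul_pos hc hx0, Real.exp_pos (-B)]

/-- Sufficiency of the Lagrange/KKT conditions: if `ξ* ∈ [0,∞)^m` satisfies `∑ᵢ ξ*ᵢ = R` and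
there is `Λ ≥ 0` such that for each `i`: `ξ*ᵢ > 0 → (μ̃ᵢ/Δᵢ)·R_1(Δᵢ/ξ*ᵢ) = Λ` and
`ξ*ᵢ = 0 → μ̃ᵢ/Δᵢ ≤ Λ`, then `ξ*` maximizes `∑ᵢ Gᵢ(ξᵢ)` over all `ξ ∈ [0,∞)^m` with
`∑ᵢ ξᵢ ≤ R` (where `R_1(x) = 1 − (1 + x)·exp(−x)`). -/
theorem stmt_18 (m : ℕ) (hm : 1 ≤ m) (μ Δ : Fin m → ℝ)
    (hμ : ∀ i, 0 < μ i) (hΔ : ∀ i, 0 < Δ i) (R : ℝ) (hR : 0 < R)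
    (ξs : Fin m → ℝ) (hξs : ∀ i, 0 ≤ ξs i) (hsum : ∑ i, ξs i = R)
    (Λ : ℝ) (hΛ : 0 ≤ Λ)
    (hact : ∀ i, 0 < ξs i →
      (μ i / Δ i) * (1 - (1 + Δ i / ξs i) * Real.exp (-(Δ i / ξs i))) = Λ)
    (hinact : ∀ i, ξs i = 0 → μ i / Δ i ≤ Λ) :
    ∀ ξ : Fin m → ℝ, (∀ i, 0 ≤ ξ i) → ∑ i, ξ i ≤ R →
      ∑ i, Gfun (μ i) (Δ i) (ξ i) ≤ ∑ i, Gfun (μ i) (Δ i) (ξs i) := by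
  intro ξ hξ hle
  have step : ∑ i, Gfun (μ i) (Δ i) (ξ i) ≤
      ∑ i, (Gfun (μ i) (Δ i) (ξs i) + Λ * (ξ i - ξs i)) := by
    apply Finset.sum_le_sum
    intro i _
    exact Gfun_tangent (μ i) (Δ i) Λ (ξs i) (ξ i) (hμ i) (hΔ i) hΛ
      (hξs i) (hξ i) (hact i) (hinact i)
  calc ∑ i, Gfun (μ i) (Δ i) (ξ i)
      ≤ ∑ i, (Gfun (μ i) (Δ i) (ξs i) + Λ * (ξ i - ξs i)) := step
    _ = ∑ i, Gfun (μ i) (Δ i) (ξs i) + Λ * (∑ i, ξ i - R) := by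
        rw [Finset.sum_add_distrib, ← Finset.mul_sum, Finset.sum_sub_distrib, hsum]
    _ ≤ ∑ i, Gfun (μ i) (Δ i) (ξs i) := by
        nlinarith
end

section
/- Necessity of the Lagrange/KKT conditions: if ξ* ∈ [0, ∞)^m with ∑_{i=1}^m ξ*_i ≤ R maximizes ∑_{i=1}^m G_i(ξ_i) over all ξ ∈ [0, ∞)^m with ∑_{i=1}^m ξ_i ≤ R, then ∑_{i=1}^m ξ*_i = R and there exists Λ ≥ 0 such that for each i ∈ {1, …, m}: if ξ*_i > 0 then (μ̃_i/Δ_i)·R_1(Δ_i/ξ*_i) = Λ, and if ξ*_i = 0 then μ̃_i/Δ_i ≤ Λ. -/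
open Real Finset

lemma hasDerivAt_Gfun (μ : ℝ) {Δ : ℝ} (hΔ : Δ ≠ 0) {x : ℝ} (hx : 0 < x) :
    HasDerivAt (Gfun μ Δ) ((μ / Δ) * (1 - (1 + Δ / x) * Real.exp (-(Δ / x)))) x := by
  have hx0 := hx.ne'
  have hinner : HasDerivAt (fun y : ℝ => -(Δ / y)) (Δ / x ^ 2) x := by
    have := ((hasDerivAt_inv hx0).const_mul Δ).neg
    convert this using 1
    rfl
    rfl
    · simp only [div_eq_mul_inv]; rfl
    field_simp
  have hexp : HasDerivAt (fun y : ℝ => Real.exp (-(Δ / y))) (Real.exp (-(Δ / x)) * (Δ / x ^ 2)) x :=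
    (Real.hasDerivAt_exp _).comp x hinner
  have hf : HasDerivAt (fun y : ℝ => (μ / Δ) * y * (1 - Real.exp (-(Δ / y))))
      ((μ / Δ) * (1 - (1 + Δ / x) * Real.exp (-(Δ / x)))) x := by
    have h1 : HasDerivAt (fun y : ℝ => (μ / Δ) * y) (μ / Δ) x := by
      simpa using (hasDerivAt_id x).const_mul (μ / Δ)
    have h2 : HasDerivAt (fun y : ℝ => 1 - Real.exp (-(Δ / y)))
        (-(Real.exp (-(Δ / x)) * (Δ / x ^ 2))) x := hexp.const_sub 1
    have := h1.mul h2
    convert this using 1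
    rfl
    rfl
    rfl
    field_simp
    ring
  apply hf.congr_of_eventuallyEq
  filter_upwards [eventually_ne_nhds hx0] with y hy
  simp [Gfun, hy]

lemma sum_update_comp {m : ℕ} (H : Fin m → ℝ → ℝ) (w : Fin m → ℝ) (j : Fin m) (b : ℝ) :
    ∑ k, H k (Function.update w j b k) = ∑ k, H k (w k) - H j (w j) + H j b := by
  have h1 : (fun k => H k (Function.update w j b k))
      = Function.update (fun k => H k (w k)) j (H j b) := by
    funext k
    rcases eq_or_ne k j with rfl | h
    · simp
    · simp [Function.update_of_ne h]
  rw [h1, Finset.sum_update_of_mem (Finset.mem_univ j)]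
  rw [show (Finset.univ \ {j} : Finset (Fin m)) = Finset.univ.erase j by
    rw [Finset.erase_eq]]
  rw [Finset.sum_erase_eq_sub (Finset.mem_univ j)]
  ring

lemma R1_pos {y : ℝ} (hy : 0 < y) : 0 < 1 - (1 + y) * Real.exp (-y) := by
  have h := Real.add_one_lt_exp hy.ne'
  have he : Real.exp (-y) * Real.exp y = 1 := by
    rw [← Real.exp_add]; simp
  nlinarith [Real.exp_pos (-y), Real.exp_pos y]

lemma Gfun_pos {μ Δ x : ℝ} (hμ : 0 < μ) (hΔ : 0 < Δ) (hx : 0 < x) : 0 < Gfun μ Δ x := by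
  rw [Gfun, if_neg hx.ne']
  have h1 : Real.exp (-(Δ / x)) < 1 := by
    rw [Real.exp_lt_one_iff]
    have : (0:ℝ) < Δ / x := by positivity
    linarith
  have h2 : (0:ℝ) < 1 - Real.exp (-(Δ / x)) := by linarith
  positivity

lemma Gfun_strictMonoOn {μ Δ : ℝ} (hμ : 0 < μ) (hΔ : 0 < Δ) :
    StrictMonoOn (Gfun μ Δ) (Set.Ioi 0) := by
  apply strictMonoOn_of_deriv_pos (convex_Ioi 0)
  · intro x hx
    exact (hasDerivAt_Gfun μ hΔ.ne' hx).continuousAt.continuousWithinAt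
  · intro x hx
    rw [interior_Ioi] at hx
    have hx' : 0 < x := hx
    rw [(hasDerivAt_Gfun μ hΔ.ne' hx').deriv]
    exact mul_pos (by positivity) (R1_pos (y := Δ / x) (by positivity))

lemma Gfun_lt {μ Δ : ℝ} (hμ : 0 < μ) (hΔ : 0 < Δ) {a δ : ℝ} (ha : 0 ≤ a) (hδ : 0 < δ) :
    Gfun μ Δ a < Gfun μ Δ (a + δ) := by
  rcases eq_or_lt_of_le ha with rfl | ha'
  · rw [Gfun, if_pos rfl]
    simpa using Gfun_pos hμ hΔ (by linarith : (0:ℝ) < 0 + δ)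
  · exact Gfun_strictMonoOn hμ hΔ ha' (by simp; linarith) (by linarith)

/-- Necessity of the Lagrange/KKT conditions: if `ξ* ∈ [0,∞)^m` with `∑ᵢ ξ*ᵢ ≤ R` maximizes
`∑ᵢ Gᵢ(ξᵢ)` over all `ξ ∈ [0,∞)^m` with `∑ᵢ ξᵢ ≤ R`, then `∑ᵢ ξ*ᵢ = R` and there exists
`Λ ≥ 0` such that for each `i`: `ξ*ᵢ > 0 → (μ̃ᵢ/Δᵢ)·R_1(Δᵢ/ξ*ᵢ) = Λ` and
`ξ*ᵢ = 0 → μ̃ᵢ/Δᵢ ≤ Λ` (where `R_1(x) = 1 − (1 + x)·exp(−x)`). -/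
theorem stmt_19 (m : ℕ) (hm : 1 ≤ m) (μ Δ : Fin m → ℝ)
    (hμ : ∀ i, 0 < μ i) (hΔ : ∀ i, 0 < Δ i) (R : ℝ) (hR : 0 < R)
    (ξs : Fin m → ℝ) (hξs : ∀ i, 0 ≤ ξs i) (hsum : ∑ i, ξs i ≤ R)
    (hopt : ∀ ξ : Fin m → ℝ, (∀ i, 0 ≤ ξ i) → ∑ i, ξ i ≤ R →
      ∑ i, Gfun (μ i) (Δ i) (ξ i) ≤ ∑ i, Gfun (μ i) (Δ i) (ξs i)) :
    ∑ i, ξs i = R ∧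
    ∃ Λ : ℝ, 0 ≤ Λ ∧
      (∀ i, 0 < ξs i →
        (μ i / Δ i) * (1 - (1 + Δ i / ξs i) * Real.exp (-(Δ i / ξs i))) = Λ) ∧
      (∀ i, ξs i = 0 → μ i / Δ i ≤ Λ) := by
  -- the perturbation inequality
  have key : ∀ i j : Fin m, i ≠ j → ∀ t : ℝ, 0 ≤ t → t ≤ ξs i →
      Gfun (μ j) (Δ j) (ξs j + t) + Gfun (μ i) (Δ i) (ξs i - t)
        ≤ Gfun (μ j) (Δ j) (ξs j) + Gfun (μ i) (Δ i) (ξs i) := by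
    intro i j hij t ht hti
    set w : Fin m → ℝ := Function.update ξs i (ξs i - t) with hw
    set ξ' : Fin m → ℝ := Function.update w j (ξs j + t) with hξ'
    have hwj : w j = ξs j := Function.update_of_ne (Ne.symm hij) _ _
    have hnn : ∀ k, 0 ≤ ξ' k := by
      intro k
      rcases eq_or_ne k j with rfl | hkj
      · rw [hξ', Function.update_self]
        have := hξs k; linarith
      · rw [hξ', Function.update_of_ne hkj]
        rcases eq_or_ne k i with rfl | hki
        · rw [hw, Function.update_self]; linarith
        · rw [hw, Function.update_of_ne hki]; exact hξs k
    have hsum' : ∑ k, ξ' k = ∑ k, ξs k := by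
      have e1 := sum_update_comp (fun _ x => x) w j (ξs j + t)
      have e2 := sum_update_comp (fun _ x => x) ξs i (ξs i - t)
      rw [hξ', e1, hwj, hw, e2]; ring
    have hobj := hopt ξ' hnn (by rw [hsum']; exact hsum)
    have e1 := sum_update_comp (fun k x => Gfun (μ k) (Δ k) x) w j (ξs j + t)
    have e2 := sum_update_comp (fun k x => Gfun (μ k) (Δ k) x) ξs i (ξs i - t)
    rw [hξ', e1, hwj, hw, e2] at hobj
    linarith
  -- the budget is saturated
  have hsumR : ∑ i, ξs i = R := by
    by_contra hne
    have hlt : ∑ i, ξs i < R := lt_of_le_of_ne hsum hne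
    set i0 : Fin m := ⟨0, hm⟩ with hi0
    set δ : ℝ := R - ∑ i, ξs i with hδ
    have hδpos : 0 < δ := by rw [hδ]; linarith
    set ξ' : Fin m → ℝ := Function.update ξs i0 (ξs i0 + δ) with hξ'
    have hnn : ∀ k, 0 ≤ ξ' k := by
      intro k
      rcases eq_or_ne k i0 with hk | hk
      · rw [hξ', hk, Function.update_self]
        have := hξs i0; linarith
      · rw [hξ', Function.update_of_ne hk]; exact hξs k
    have hs : ∑ k, ξ' k = R := by
      have e1 := sum_update_comp (fun _ x => x) ξs i0 (ξs i0 + δ)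
      rw [hξ', e1, hδ]; ring
    have hobj := hopt ξ' hnn hs.le
    have e1 := sum_update_comp (fun k x => Gfun (μ k) (Δ k) x) ξs i0 (ξs i0 + δ)
    rw [hξ', e1] at hobj
    have := Gfun_lt (hμ i0) (hΔ i0) (hξs i0) hδpos
    linarith
  -- some coordinate is positive
  have hex : ∃ i, 0 < ξs i := by
    by_contra h
    push_neg at h
    have hz : ∀ i ∈ Finset.univ, ξs i = 0 := fun i _ => le_antisymm (h i) (hξs i)
    rw [Finset.sum_congr rfl hz] at hsumR
    simp at hsumR
    linarith
  set g : Fin m → ℝ := fun i =>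
    (μ i / Δ i) * (1 - (1 + Δ i / ξs i) * Real.exp (-(Δ i / ξs i))) with hg
  -- derivative of the decreasing branch
  have hderiv_i : ∀ i : Fin m, 0 < ξs i →
      HasDerivAt (fun t : ℝ => Gfun (μ i) (Δ i) (ξs i - t)) (-(g i)) 0 := by
    intro i hi
    have hinner : HasDerivAt (fun t : ℝ => ξs i - t) (-1) 0 := by
      simpa using (hasDerivAt_id (0:ℝ)).const_sub (ξs i)
    have houter := hasDerivAt_Gfun (μ i) (hΔ i).ne' (x := ξs i - 0) (by simpa using hi)
    have := houter.comp 0 hinner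
    simp only [sub_zero] at this
    exact this.congr_deriv (by rw [hg]; ring)
  -- equal marginal values for positive coordinates
  have hle : ∀ i j : Fin m, i ≠ j → 0 < ξs i → 0 < ξs j → g j ≤ g i := by
    intro i j hij hi hj
    set F : ℝ → ℝ := fun t =>
      Gfun (μ j) (Δ j) (ξs j + t) + Gfun (μ i) (Δ i) (ξs i - t) with hF
    have hdj : HasDerivAt (fun t : ℝ => Gfun (μ j) (Δ j) (ξs j + t)) (g j) 0 := by
      have hinner : HasDerivAt (fun t : ℝ => ξs j + t) 1 0 := by
        simpa using (hasDerivAt_id (0:ℝ)).const_add (ξs j)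
      have houter := hasDerivAt_Gfun (μ j) (hΔ j).ne' (x := ξs j + 0) (by simpa using hj)
      have := houter.comp 0 hinner
      simp only [add_zero] at this
      exact this.congr_deriv (by rw [hg]; ring)
    have hdF : HasDerivAt F (g j - g i) 0 := by
      have := hdj.add (hderiv_i i hi)
      simp only [hF, sub_eq_add_neg] at this ⊢
      exact this
    rw [hasDerivAt_iff_tendsto_slope] at hdF
    have hT : Filter.Tendsto (slope F 0) (nhdsWithin 0 (Set.Ioi 0)) (nhds (g j - g i)) :=
      hdF.mono_left (nhdsWithin_mono 0 (fun x hx => ne_of_gt hx))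
    have hsl : ∀ᶠ t in nhdsWithin (0:ℝ) (Set.Ioi 0), slope F 0 t ≤ 0 := by
      filter_upwards [Ioo_mem_nhdsGT_of_mem (Set.left_mem_Ico.mpr hi)] with t ht
      have hkey := key i j hij t ht.1.le ht.2.le
      have hF0 : F 0 = Gfun (μ j) (Δ j) (ξs j) + Gfun (μ i) (Δ i) (ξs i) := by
        simp [hF]
      have hFt : F t ≤ F 0 := by rw [hF0]; exact hkey
      rw [slope_def_field]
      apply div_nonpos_of_nonpos_of_nonneg
      · linarith
      · linarith [ht.1]
    have := le_of_tendsto hT hsl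
    linarith
  -- bound for zero coordinates
  have hle0 : ∀ i j : Fin m, i ≠ j → 0 < ξs i → ξs j = 0 → μ j / Δ j ≤ g i := by
    intro i j hij hi hj0
    have hdi := hderiv_i i hi
    rw [hasDerivAt_iff_tendsto_slope] at hdi
    have hT1 : Filter.Tendsto
        (fun t => (Gfun (μ i) (Δ i) (ξs i) - Gfun (μ i) (Δ i) (ξs i - t)) / t)
        (nhdsWithin 0 (Set.Ioi 0)) (nhds (g i)) := by
      have h1 := (hdi.mono_left (nhdsWithin_mono 0 (fun x hx => ne_of_gt hx))).neg
      rw [neg_neg] at h1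
      apply h1.congr
      intro t
      rw [slope_def_field]
      simp only [sub_zero]
      ring
    have hT2 : Filter.Tendsto (fun t => Gfun (μ j) (Δ j) t / t)
        (nhdsWithin 0 (Set.Ioi 0)) (nhds (μ j / Δ j)) := by
      have h1 : Filter.Tendsto (fun t : ℝ => t⁻¹) (nhdsWithin (0:ℝ) (Set.Ioi 0)) Filter.atTop :=
        tendsto_inv_nhdsGT_zero
      have h2 : Filter.Tendsto (fun t : ℝ => Δ j * t⁻¹) (nhdsWithin (0:ℝ) (Set.Ioi 0))
          Filter.atTop := h1.const_mul_atTop (hΔ j)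
      have h3 := Filter.tendsto_neg_atTop_atBot.comp h2
      have h4 := Real.tendsto_exp_atBot.comp h3
      have h5 : Filter.Tendsto (fun t : ℝ => (μ j / Δ j) * (1 - Real.exp (-(Δ j * t⁻¹))))
          (nhdsWithin (0:ℝ) (Set.Ioi 0)) (nhds ((μ j / Δ j) * (1 - 0))) :=
        (tendsto_const_nhds.sub h4).const_mul _
      rw [sub_zero, mul_one] at h5
      apply h5.congr'
      filter_upwards [self_mem_nhdsWithin] with t ht
      have ht0 : t ≠ 0 := ne_of_gt ht
      rw [Gfun, if_neg ht0, div_eq_mul_inv (Δ j) t, mul_comm (μ j / Δ j) t, mul_assoc,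
        mul_div_cancel_left₀ _ ht0]
    have hev : ∀ᶠ t in nhdsWithin (0:ℝ) (Set.Ioi 0),
        Gfun (μ j) (Δ j) t / t ≤
          (Gfun (μ i) (Δ i) (ξs i) - Gfun (μ i) (Δ i) (ξs i - t)) / t := by
      filter_upwards [Ioo_mem_nhdsGT_of_mem (Set.left_mem_Ico.mpr hi)] with t ht
      have hkey := key i j hij t ht.1.le ht.2.le
      rw [hj0, zero_add] at hkey
      have h0 : Gfun (μ j) (Δ j) 0 = 0 := by simp [Gfun]
      rw [h0, zero_add] at hkey
      exact (div_le_div_iff_of_pos_right ht.1).mpr (by linarith)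
    exact le_of_tendsto_of_tendsto hT2 hT1 hev
  obtain ⟨i1, hi1⟩ := hex
  refine ⟨hsumR, g i1, ?_, ?_, ?_⟩
  · have hpos : 0 < Δ i1 / ξs i1 := div_pos (hΔ i1) hi1
    exact (mul_pos (div_pos (hμ i1) (hΔ i1)) (R1_pos hpos)).le
  · intro i hi
    rcases eq_or_ne i i1 with rfl | h
    · rfl
    · exact le_antisymm (hle i1 i (Ne.symm h) hi1 hi) (hle i i1 h hi hi1)
  · intro i hi0
    have h : i1 ≠ i := by
      intro he; rw [he, hi0] at hi1; exact lt_irrefl 0 hi1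
    exact hle0 i1 i h hi1 hi0
end
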